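/- arXiv:2604.08285 — 8 statements merged into one kernel-verified Lean document; each statement's English description precedes it below -/
import Mathlib

section
/- General integral comparison principle: let r₁ ∈ ℝ, let F : [r₁,∞) × ℝ → ℝ be continuous and nonincreasing in its second variable (F(u,x) ≥ F(u,y) whenever x ≤ y), let a : [r₁,∞) → ℝ be continuous and satisfy a(t) − a(s) ≥ ∫ₛᵗ F(u, a(u)) du for all r₁ ≤ s ≤ t, and let φ : [r₁,∞) → ℝ be continuously differentiable with φ'(u) ≤ F(u, φ(u)) for all u ≥ r₁ and φ(r₁) ≤ a(r₁). Then a(r) ≥ φ(r) for all r ≥ r₁. -/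
open intervalIntegral

/-- General integral comparison principle: if `F` is continuous and nonincreasing in its
second variable, `a` is continuous and satisfies the integral inequality
`a t - a s ≥ ∫ₛᵗ F u (a u) du`, and `φ` is continuously differentiable with
`φ' u ≤ F u (φ u)` and `φ r₁ ≤ a r₁`, then `a ≥ φ` on `[r₁, ∞)`. -/
theorem integral_comparison_principle (r₁ : ℝ) (F : ℝ → ℝ → ℝ) (a φ φ' : ℝ → ℝ)
    (hF_cont : ContinuousOn (fun p : ℝ × ℝ => F p.1 p.2) (Set.Ici r₁ ×ˢ Set.univ))
    (hF_anti : ∀ u ∈ Set.Ici r₁, ∀ x y : ℝ, x ≤ y → F u y ≤ F u x)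
    (ha_cont : ContinuousOn a (Set.Ici r₁))
    (ha_int : ∀ s t : ℝ, r₁ ≤ s → s ≤ t → a t - a s ≥ ∫ u in s..t, F u (a u))
    (hφ_deriv : ∀ u ∈ Set.Ici r₁, HasDerivWithinAt φ (φ' u) (Set.Ici r₁) u)
    (hφ'_cont : ContinuousOn φ' (Set.Ici r₁))
    (hφ'_le : ∀ u ∈ Set.Ici r₁, φ' u ≤ F u (φ u))
    (hφ₁ : φ r₁ ≤ a r₁) :
    ∀ r ∈ Set.Ici r₁, a r ≥ φ r := by
  have hφ_cont : ContinuousOn φ (Set.Ici r₁) :=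
    fun u hu => (hφ_deriv u hu).continuousWithinAt
  intro r hr
  by_contra hcon
  push_neg at hcon
  -- the set where φ ≤ a on [r₁, r]
  set S : Set ℝ := {t | t ∈ Set.Icc r₁ r ∧ φ t ≤ a t} with hS
  have hSne : S.Nonempty := ⟨r₁, ⟨le_refl _, hr⟩, hφ₁⟩
  have hScomp : IsCompact S := by
    have hclosed : IsClosed S := by
      have h1 : ContinuousOn (fun t => a t - φ t) (Set.Icc r₁ r) :=
        (ha_cont.mono (Set.Icc_subset_Ici_self)).sub
          (hφ_cont.mono (Set.Icc_subset_Ici_self))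
      have : S = Set.Icc r₁ r ∩ (fun t => a t - φ t) ⁻¹' Set.Ici 0 := by
        ext t; simp [hS, Set.mem_Icc, sub_nonneg, and_assoc]
      rw [this]
      exact h1.preimage_isClosed_of_isClosed isClosed_Icc isClosed_Ici
    exact (isCompact_Icc (a := r₁) (b := r)).of_isClosed_subset hclosed
      (fun t ht => ht.1)
  set s := sSup S with hs_def
  have hsS : s ∈ S := hScomp.sSup_mem hSne
  obtain ⟨⟨hr₁s, hsr⟩, hφs⟩ := hsS
  have hsr' : s < r := hsr.lt_of_ne (fun h => (not_le.mpr hcon) (h ▸ hφs))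
  -- on (s, r], a < φ
  have hlt : ∀ u ∈ Set.Ioc s r, a u < φ u := by
    intro u hu
    by_contra h
    push_neg at h
    have : u ∈ S := ⟨⟨hr₁s.trans hu.1.le, hu.2⟩, h⟩
    have hbdd : BddAbove S := ⟨r, fun t ht => ht.1.2⟩
    exact absurd (le_csSup hbdd this) (not_le.mpr hu.1)
  -- a s ≤ φ s by continuity from the right
  have hIci : Set.Ioi s ⊆ Set.Ici r₁ := fun u hu => hr₁s.trans hu.le
  have has : a s ≤ φ s := by
    have hta : Filter.Tendsto a (nhdsWithin s (Set.Ioi s)) (nhds (a s)) :=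
      (ha_cont s hr₁s).mono hIci
    have htφ : Filter.Tendsto φ (nhdsWithin s (Set.Ioi s)) (nhds (φ s)) :=
      (hφ_cont s hr₁s).mono hIci
    refine le_of_tendsto_of_tendsto hta htφ ?_
    filter_upwards [Ioc_mem_nhdsGT hsr'] with u hu
    exact (hlt u hu).le
  have hφsa : φ s = a s := le_antisymm hφs has
  -- a ≤ φ on [s, r]
  have hle : ∀ u ∈ Set.Icc s r, a u ≤ φ u := by
    intro u hu
    rcases eq_or_lt_of_le hu.1 with h | h
    · rw [← h]; exact has
    · exact (hlt u ⟨h, hu.2⟩).le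
  have hsub : Set.Icc s r ⊆ Set.Ici r₁ := fun u hu => hr₁s.trans hu.1
  -- continuity of integrands on [s, r]
  have hFa_cont : ContinuousOn (fun u => F u (a u)) (Set.Icc s r) := by
    apply hF_cont.comp (continuousOn_id.prodMk (ha_cont.mono hsub))
    exact fun u hu => ⟨hsub hu, Set.mem_univ _⟩
  have hFφ_cont : ContinuousOn (fun u => F u (φ u)) (Set.Icc s r) := by
    apply hF_cont.comp (continuousOn_id.prodMk (hφ_cont.mono hsub))
    exact fun u hu => ⟨hsub hu, Set.mem_univ _⟩
  have hFa_int : IntervalIntegrable (fun u => F u (a u)) MeasureTheory.volume s r :=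
    (hFa_cont.mono (by rw [Set.uIcc_of_le hsr'.le])).intervalIntegrable
  have hFφ_int : IntervalIntegrable (fun u => F u (φ u)) MeasureTheory.volume s r :=
    (hFφ_cont.mono (by rw [Set.uIcc_of_le hsr'.le])).intervalIntegrable
  have hφ'_int : IntervalIntegrable φ' MeasureTheory.volume s r :=
    (hφ'_cont.mono (by rw [Set.uIcc_of_le hsr'.le]; exact hsub)).intervalIntegrable
  -- FTC for φ
  have hFTC : ∫ u in s..r, φ' u = φ r - φ s := by
    apply intervalIntegral.integral_eq_sub_of_hasDeriv_right_of_le hsr'.le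
      (hφ_cont.mono hsub)
      (fun x hx => ?_) hφ'_int
    have hx' : r₁ < x := lt_of_le_of_lt hr₁s hx.1
    exact ((hφ_deriv x hx'.le).hasDerivAt (Ici_mem_nhds hx')).hasDerivWithinAt
  -- pointwise comparison of integrands
  have hmono1 : ∫ u in s..r, φ' u ≤ ∫ u in s..r, F u (φ u) := by
    apply intervalIntegral.integral_mono_on hsr'.le hφ'_int hFφ_int
    intro u hu; exact hφ'_le u (hsub hu)
  have hmono2 : ∫ u in s..r, F u (φ u) ≤ ∫ u in s..r, F u (a u) := by
    apply intervalIntegral.integral_mono_on hsr'.le hFφ_int hFa_int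
    intro u hu; exact hF_anti u (hsub hu) _ _ (hle u hu)
  have hfinal := ha_int s r hr₁s hsr'.le
  have : φ r - φ s ≤ a r - a s := by
    calc φ r - φ s = ∫ u in s..r, φ' u := hFTC.symm
    _ ≤ ∫ u in s..r, F u (φ u) := hmono1
    _ ≤ ∫ u in s..r, F u (a u) := hmono2
    _ ≤ a r - a s := hfinal
  rw [hφsa] at this
  linarith
end

section
/- Riccati-type lower bound (parabolic case): let r₁ ∈ ℝ and let a : [r₁,∞) → ℝ be continuous with a(r₁) > 0, satisfying the integral inequality a(t) − a(s) ≥ −(1/2) ∫ₛᵗ a(u)² du for all r₁ ≤ s ≤ t. Then for every r ≥ r₁ one has a(r) ≥ 2 / ( r − r₁ + 2/a(r₁) ). -/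
open intervalIntegral Set Filter Topology

/-- Key reciprocal estimate: on an interval where `a` is positive, `1 / a` grows
at most with slope `1/2`. -/
lemma riccati_recip_key (r₁ : ℝ) (a : ℝ → ℝ)
    (ha_cont : ContinuousOn a (Set.Ici r₁))
    (ha_int : ∀ s t : ℝ, r₁ ≤ s → s ≤ t →
      a t - a s ≥ -(1/2) * ∫ u in s..t, (a u)^2)
    (s t : ℝ) (hs : r₁ ≤ s) (hst : s ≤ t)
    (hpos : ∀ x ∈ Set.Icc s t, 0 < a x) :
    1 / a t ≤ 1 / a s + (t - s) / 2 := by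
  have hsub : Set.Icc s t ⊆ Set.Ici r₁ := fun x hx => le_trans hs hx.1
  have hne : ∀ x ∈ Set.Icc s t, a x ≠ 0 := fun x hx => (hpos x hx).ne'
  have hf : ContinuousOn (fun x => 1 / a x) (Set.Icc s t) :=
    continuousOn_const.div (ha_cont.mono hsub) hne
  have hB : ContinuousOn (fun x : ℝ => 1 / a s + (x - s) / 2) (Set.Icc s t) := by
    fun_prop
  have hB' : ∀ x ∈ Set.Ico s t,
      HasDerivWithinAt (fun x : ℝ => 1 / a s + (x - s) / 2) ((1:ℝ)/2) (Set.Ici x) x := by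
    intro x _
    have h : HasDerivAt (fun y : ℝ => 1 / a s + (y - s) / 2) ((1:ℝ)/2) x := by
      simpa using (((hasDerivAt_id x).sub_const s).div_const 2).const_add (1 / a s)
    exact h.hasDerivWithinAt
  have bound : ∀ x ∈ Set.Ico s t, ∀ r, (1:ℝ)/2 < r →
      ∃ᶠ z in 𝓝[>] x, slope (fun y => 1 / a y) x z < r := by
    intro x hx r hr
    have hxr₁ : r₁ ≤ x := le_trans hs hx.1
    set α := a x with hα
    have hαpos : 0 < α := hpos x (Set.Ico_subset_Icc_self hx)
    -- choose ε > 0 small so that the perturbed ratio is still below r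
    have hcont : ContinuousAt (fun ε : ℝ => (α + ε)^2 / (2 * α * (α - ε))) 0 := by
      apply ContinuousAt.div
      · fun_prop
      · fun_prop
      · simp only [sub_zero]
        positivity
    have h0 : (α + 0)^2 / (2 * α * (α - 0)) = 1/2 := by
      rw [add_zero, sub_zero, pow_two, div_eq_iff (mul_pos (mul_pos two_pos hαpos) hαpos).ne']
      ring
    have hev1 : ∀ᶠ ε in 𝓝[>] (0:ℝ), (α + ε)^2 / (2 * α * (α - ε)) < r := by
      apply nhdsWithin_le_nhds
      apply hcont.eventually_lt_const
      show (α + 0)^2 / (2 * α * (α - 0)) < r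
      rw [h0]; exact hr
    have hev2 : Set.Ioo (0:ℝ) α ∈ 𝓝[>] (0:ℝ) :=
      Ioo_mem_nhdsGT_of_mem ⟨le_rfl, hαpos⟩
    obtain ⟨ε, hgε, hεmem⟩ := (hev1.and (eventually_of_mem hev2 (fun y hy => hy))).exists
    obtain ⟨hε0, hεα⟩ := hεmem
    -- continuity of a at x within Ici r₁ gives a δ
    have hcx : ContinuousWithinAt a (Set.Ici r₁) x := ha_cont x hxr₁
    rw [Metric.continuousWithinAt_iff] at hcx
    obtain ⟨δ, hδ0, hδ⟩ := hcx ε hε0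
    refine Filter.Eventually.frequently ?_
    filter_upwards [Ioo_mem_nhdsGT_of_mem ⟨le_rfl, lt_add_of_pos_right x hδ0⟩] with z hz
    obtain ⟨hxz, hzδ⟩ := hz
    have hzx : 0 < z - x := sub_pos.2 hxz
    -- bounds for a on [x, z]
    have hb : ∀ u ∈ Set.Icc x z, α - ε < a u ∧ a u < α + ε := by
      intro u hu
      have hur : u ∈ Set.Ici r₁ := le_trans hxr₁ hu.1
      have hd : dist u x < δ := by
        rw [Real.dist_eq, abs_of_nonneg (sub_nonneg.2 hu.1)]
        linarith [hu.2]
      have := hδ hur hd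
      rw [Real.dist_eq, abs_lt] at this
      constructor <;> linarith [this.1, this.2]
    have hazl : α - ε < a z := (hb z ⟨hxz.le, le_rfl⟩).1
    have hazpos : 0 < a z := by linarith
    -- integral bound
    have hci : ContinuousOn (fun u => (a u)^2) (Set.Icc x z) := by
      have : Set.Icc x z ⊆ Set.Ici r₁ := fun u hu => le_trans hxr₁ hu.1
      exact (ha_cont.mono this).pow 2
    have hint1 : IntervalIntegrable (fun u => (a u)^2) MeasureTheory.volume x z :=
      hci.intervalIntegrable_of_Icc hxz.le
    have hintle : (∫ u in x..z, (a u)^2) ≤ (z - x) * (α + ε)^2 := by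
      have h1 : (∫ u in x..z, (a u)^2) ≤ ∫ _ in x..z, (α + ε)^2 := by
        apply intervalIntegral.integral_mono_on hxz.le hint1 intervalIntegrable_const
        intro u hu
        have := hb u hu
        nlinarith [this.1, this.2, hε0, hαpos]
      have h2 : (∫ _ in x..z, (α + ε)^2) = (z - x) * (α + ε)^2 := by
        simp [intervalIntegral.integral_const, smul_eq_mul]
      linarith
    -- the Riccati inequality
    have hI := ha_int x z hxr₁ hxz.le
    have hkey : α - a z ≤ (z - x) * (α + ε)^2 / 2 := by
      rw [ge_iff_le, neg_mul, neg_le_sub_iff_le_add] at hI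
      nlinarith [hintle]
    -- ratio bound
    have hratio : (α + ε)^2 < r * (2 * α * (α - ε)) := by
      rw [div_lt_iff₀ (by nlinarith : (0:ℝ) < 2 * α * (α - ε))] at hgε
      linarith
    -- conclude slope bound
    rw [slope_def_field, div_lt_iff₀ hzx]
    have he1 : 1 / a z - 1 / α = (α - a z) / (a z * α) := by
      field_simp
    rw [he1, div_lt_iff₀ (by positivity)]
    nlinarith [mul_lt_mul_of_pos_left hratio (by positivity : (0:ℝ) < (z - x) / 2),
      mul_pos hzx (mul_pos (by linarith : (0:ℝ) < r) hαpos),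
      mul_lt_mul_of_pos_left hazl
        (mul_pos hzx (mul_pos (by linarith : (0:ℝ) < r) hαpos))]
  have key := image_le_of_liminf_slope_right_le_deriv_boundary hf
    (by simp : (fun x => 1 / a x) s ≤ 1 / a s + (s - s) / 2) hB hB' bound
  simpa using key (Set.right_mem_Icc.2 hst)

/-- Riccati-type lower bound (parabolic case): if `a` is continuous on `[r₁, ∞)` with
`a r₁ > 0` and satisfies `a t - a s ≥ -(1/2) ∫ₛᵗ a(u)² du`, then
`a r ≥ 2 / (r - r₁ + 2 / a r₁)` for all `r ≥ r₁`. -/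
theorem riccati_lower_bound_parabolic (r₁ : ℝ) (a : ℝ → ℝ)
    (ha_cont : ContinuousOn a (Set.Ici r₁))
    (ha_pos : 0 < a r₁)
    (ha_int : ∀ s t : ℝ, r₁ ≤ s → s ≤ t →
      a t - a s ≥ -(1/2) * ∫ u in s..t, (a u)^2) :
    ∀ r ∈ Set.Ici r₁, a r ≥ 2 / (r - r₁ + 2 / a r₁) := by
  intro r hr
  have hr : r₁ ≤ r := hr
  set C := 1 / a r₁ + (r - r₁) / 2 with hC
  have hCpos : 0 < C := by
    have : 0 < 1 / a r₁ := by positivity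
    have : 0 ≤ (r - r₁) / 2 := by linarith
    rw [hC]; positivity
  -- positivity of a on [r₁, r]
  have hApos : ∀ x ∈ Set.Icc r₁ r, 0 < a x := by
    by_contra h
    push_neg at h
    obtain ⟨x₀, hx₀, hx₀le⟩ := h
    set T := Set.Icc r₁ r ∩ a ⁻¹' Set.Iic 0 with hT
    have hTne : T.Nonempty := ⟨x₀, hx₀, hx₀le⟩
    have hTclosed : IsClosed T :=
      (ha_cont.mono (Set.Icc_subset_Ici_self)).preimage_isClosed_of_isClosed
        isClosed_Icc isClosed_Iic
    have hTbdd : BddBelow T := ⟨r₁, fun y hy => hy.1.1⟩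
    set t₀ := sInf T with ht₀def
    have ht₀T : t₀ ∈ T := hTclosed.csInf_mem hTne hTbdd
    have ht₀Icc : t₀ ∈ Set.Icc r₁ r := ht₀T.1
    have ht₀le : a t₀ ≤ 0 := ht₀T.2
    have ht₀gt : r₁ < t₀ := by
      rcases eq_or_lt_of_le ht₀Icc.1 with h | h
      · exfalso; rw [← h] at ht₀le; linarith
      · exact h
    have hlow : ∀ x ∈ Set.Ico r₁ t₀, 1 / C ≤ a x := by
      intro x hx
      have hposx : ∀ y ∈ Set.Icc r₁ x, 0 < a y := by
        intro y hy
        by_contra hya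
        push_neg at hya
        have hyT : y ∈ T := ⟨⟨hy.1, le_trans hy.2 (le_trans hx.2.le ht₀Icc.2)⟩, hya⟩
        have := csInf_le hTbdd hyT
        have : t₀ ≤ x := le_trans this hy.2
        linarith [hx.2]
      have hkey := riccati_recip_key r₁ a ha_cont ha_int r₁ x le_rfl hx.1 hposx
      have hax : 0 < a x := hposx x ⟨hx.1, le_rfl⟩
      have h1 : 1 / a x ≤ C := by
        rw [hC]
        have : x ≤ r := le_trans hx.2.le ht₀Icc.2
        linarith [hkey]
      rw [div_le_iff₀ hax] at h1
      rw [div_le_iff₀ hCpos]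
      nlinarith
    -- continuity gives a t₀ ≥ 1/C > 0, contradiction
    have hne : (𝓝[Set.Ico r₁ t₀] t₀).NeBot := by
      rw [← mem_closure_iff_nhdsWithin_neBot, closure_Ico ht₀gt.ne]
      exact Set.right_mem_Icc.2 ht₀gt.le
    have htend : Filter.Tendsto a (𝓝[Set.Ico r₁ t₀] t₀) (𝓝 (a t₀)) := by
      have h1 : ContinuousWithinAt a (Set.Ici r₁) t₀ := ha_cont t₀ ht₀Icc.1
      exact h1.mono (fun y hy => hy.1)
    have hge : 1 / C ≤ a t₀ :=
      ge_of_tendsto htend (eventually_mem_nhdsWithin.mono fun y hy => hlow y hy)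
    have : 0 < 1 / C := by positivity
    linarith
  -- apply the key lemma on [r₁, r]
  have hkey := riccati_recip_key r₁ a ha_cont ha_int r₁ r le_rfl hr hApos
  have har : 0 < a r := hApos r ⟨hr, le_rfl⟩
  have h1 : 1 / a r ≤ C := hkey
  rw [div_le_iff₀ har] at h1
  have hd : r - r₁ + 2 / a r₁ = 2 * C := by
    rw [hC]; field_simp; ring
  rw [ge_iff_le, hd, div_le_iff₀ (by positivity)]
  nlinarith
end

section
/- Quadratic growth from the Riccati integral inequality (parabolic case): let r₁ ∈ ℝ and let A : [r₁,∞) → ℝ be continuously differentiable with A(r) > 0 for all r ≥ r₁ and A'(r₁) > 0. Suppose the logarithmic derivative a(r) := A'(r)/A(r) satisfies a(t) − a(s) ≥ −(1/2) ∫ₛᵗ a(u)² du for all r₁ ≤ s ≤ t. Then A(r) ≥ A(r₁) · (1 + (A'(r₁)/(2 A(r₁)))(r − r₁))² for all r ≥ r₁; in particular there exist c > 0 and R ≥ r₁ such that A(r) ≥ c r² for all r ≥ R. -/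
open intervalIntegral

open Set in

lemma riccati_comp (r₁ a₁ : ℝ) (a : ℝ → ℝ) (ha_cont : Continuous a)
    (ha₁ : 0 < a₁) (ha_eq : a r₁ = a₁)
    (hineq : ∀ s t : ℝ, r₁ ≤ s → s ≤ t →
      a t - a s ≥ -(1/2) * ∫ u in s..t, (a u)^2) :
    ∀ t ≥ r₁, a₁ / (1 + a₁/2 * (t - r₁)) ≤ a t := by
  set b : ℝ → ℝ := fun t => a₁ / (1 + a₁/2 * (t - r₁)) with hb_def
  set bt : ℝ → ℝ := fun t => a₁ / (1 + a₁/2 * (max t r₁ - r₁)) with hbt_def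
  have hD : ∀ t ≥ r₁, 0 < 1 + a₁/2 * (t - r₁) := by
    intro t ht; nlinarith [sub_nonneg.2 ht]
  have hbt_eq : ∀ t ≥ r₁, bt t = b t := by
    intro t ht; simp [hbt_def, hb_def, max_eq_left ht]
  have hbt_cont : Continuous bt := by
    apply continuous_const.div
    · fun_prop
    · intro x
      exact (hD _ (le_max_right _ _)).ne'
  have hb_pos : ∀ t ≥ r₁, 0 < b t := fun t ht => div_pos ha₁ (hD t ht)
  have hb_deriv : ∀ t ≥ r₁, HasDerivAt b (-(1/2) * (b t)^2) t := by
    intro t ht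
    have h1 : HasDerivAt (fun t : ℝ => 1 + a₁/2 * (t - r₁)) (a₁/2) t := by
      simpa using (((hasDerivAt_id t).sub_const r₁).const_mul (a₁/2)).const_add 1
    have h2 := (h1.inv (hD t ht).ne').const_mul a₁
    have hfun : b = fun t => a₁ * (1 + a₁/2 * (t - r₁))⁻¹ := by
      simp [hb_def, div_eq_mul_inv]
    rw [hfun]
    refine h2.congr_deriv ?_
    beta_reduce
    generalize 1 + a₁/2 * (t - r₁) = D
    ring
  have hb_cont : ∀ t ≥ r₁, ContinuousAt b t := fun t ht => (hb_deriv t ht).continuousAt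
  have hb_int : ∀ s t : ℝ, r₁ ≤ s → s ≤ t →
      b t - b s = -(1/2) * ∫ u in s..t, (b u)^2 := by
    intro s t hs hst
    have hsub : uIcc s t ⊆ Ici r₁ := by
      rw [uIcc_of_le hst]; exact fun x hx => hs.trans hx.1
    have hcont : ContinuousOn (fun u => -(1/2) * (b u)^2) (uIcc s t) := by
      intro x hx
      exact (continuousAt_const.mul ((hb_cont x (hsub hx)).pow 2)).continuousWithinAt
    rw [← intervalIntegral.integral_const_mul,
      intervalIntegral.integral_eq_sub_of_hasDerivAt
        (fun x hx => hb_deriv x (hsub hx)) hcont.intervalIntegrable]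
  -- main comparison, by contradiction
  by_contra hcon
  push_neg at hcon
  obtain ⟨t₀, ht₀, hlt⟩ := hcon
  set w : ℝ → ℝ := fun t => a t - bt t with hw_def
  have hw_cont : Continuous w := ha_cont.sub hbt_cont
  have hw_r₁ : w r₁ = 0 := by
    simp [hw_def, hbt_eq r₁ le_rfl, hb_def, ha_eq]
  have hwt₀ : w t₀ < 0 := by
    simp only [hw_def, hbt_eq t₀ ht₀]
    exact sub_neg.2 hlt
  set S : Set ℝ := Icc r₁ t₀ ∩ w ⁻¹' (Ici 0) with hS_def
  have hS_ne : S.Nonempty := ⟨r₁, ⟨le_refl _, ht₀⟩, hw_r₁.ge⟩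
  have hS_bdd : BddAbove S := ⟨t₀, fun x hx => hx.1.2⟩
  have hS_closed : IsClosed S :=
    hw_cont.continuousOn.preimage_isClosed_of_isClosed isClosed_Icc isClosed_Ici
  set c := sSup S with hc_def
  have hcS : c ∈ S := hS_closed.csSup_mem hS_ne hS_bdd
  have hc_mem : c ∈ Icc r₁ t₀ := hcS.1
  have hwc_nonneg : (0:ℝ) ≤ w c := hcS.2
  have hneg : ∀ t ∈ Ioc c t₀, w t < 0 := by
    intro t ht
    by_contra h
    push_neg at h
    have : t ∈ S := ⟨⟨hc_mem.1.trans ht.1.le, ht.2⟩, h⟩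
    exact absurd (le_csSup hS_bdd this) (not_le.2 ht.1)
  have hct₀ : c < t₀ := by
    rcases lt_or_eq_of_le hc_mem.2 with h | h
    · exact h
    · exact absurd (h ▸ hwc_nonneg) (not_le.2 hwt₀)
  have hwc : w c = 0 := by
    refine le_antisymm ?_ hwc_nonneg
    have htend : Filter.Tendsto w (nhdsWithin c (Ioi c)) (nhds (w c)) :=
      (hw_cont.continuousAt).continuousWithinAt.tendsto
    refine le_of_tendsto htend ?_
    filter_upwards [Ioc_mem_nhdsGT_of_mem ⟨le_refl c, hct₀⟩] with t ht
    exact (hneg t ht).le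
  -- bound on a + b
  obtain ⟨M, hM⟩ := (isCompact_Icc (a := c) (b := t₀)).exists_bound_of_continuousOn
    ((ha_cont.add hbt_cont).continuousOn)
  have hw_nonpos : ∀ u ∈ Icc c t₀, w u ≤ 0 := by
    intro u hu
    rcases eq_or_lt_of_le hu.1 with h | h
    · rw [← h, hwc]
    · exact (hneg u ⟨h, hu.2⟩).le
  set W : ℝ → ℝ := fun t => ∫ u in c..t, w u with hW_def
  have hW_deriv : ∀ t : ℝ, HasDerivAt W (w t) t := fun t =>
    (hw_cont.integral_hasStrictDerivAt c t).hasDerivAt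
  -- key inequality
  have key : ∀ t ∈ Icc c t₀, M/2 * W t ≤ w t := by
    intro t ht
    have hr₁c : r₁ ≤ c := hc_mem.1
    have hIci : Icc c t ⊆ Ici r₁ := fun x hx => hr₁c.trans hx.1
    have hair := hineq c t hr₁c ht.1
    have hbir := hb_int c t hr₁c ht.1
    have hacont : ContinuousOn (fun u => (a u)^2) (uIcc c t) :=
      ((ha_cont.pow 2).continuousOn)
    have hbcont : ContinuousOn (fun u => (b u)^2) (uIcc c t) := by
      intro x hx
      rw [uIcc_of_le ht.1] at hx
      exact ((hb_cont x (hIci hx)).pow 2).continuousWithinAt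
    -- w t ≥ -(1/2) ∫ (a² - b²)
    have h1 : w t - w c ≥ -(1/2) * ∫ u in c..t, ((a u)^2 - (b u)^2) := by
      rw [intervalIntegral.integral_sub hacont.intervalIntegrable hbcont.intervalIntegrable]
      have : w t - w c = (a t - a c) - (b t - b c) := by
        simp only [hw_def, hbt_eq t (hIci ⟨ht.1, le_refl t⟩), hbt_eq c (hIci ⟨le_refl c, ht.1⟩)]
        ring
      rw [this, hbir]
      linarith [hair]
    -- rewrite integrand
    have h2 : (∫ u in c..t, ((a u)^2 - (b u)^2)) = ∫ u in c..t, -2 * ((-(1/2)) * (a u + b u) * w u) := by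
      apply intervalIntegral.integral_congr
      intro x hx
      rw [uIcc_of_le ht.1] at hx
      simp only [hw_def, hbt_eq x (hIci hx)]
      ring
    have hint1 : IntervalIntegrable (fun u => (-(1/2)) * (a u + b u) * w u) MeasureTheory.volume c t := by
      apply ContinuousOn.intervalIntegrable
      have hc : ContinuousOn (fun u => (-(1/2)) * (a u + bt u) * w u) (uIcc c t) :=
        ((continuous_const.mul (ha_cont.add hbt_cont)).mul hw_cont).continuousOn
      refine hc.congr fun y hy => ?_
      rw [uIcc_of_le ht.1] at hy
      simp only [hbt_eq y (hIci hy)]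
    have hint2 : IntervalIntegrable (fun u => M/2 * w u) MeasureTheory.volume c t :=
      (continuous_const.mul hw_cont).intervalIntegrable c t
    have h3 : (∫ u in c..t, M/2 * w u) ≤ ∫ u in c..t, (-(1/2)) * (a u + b u) * w u := by
      apply intervalIntegral.integral_mono_on ht.1 hint2 hint1
      intro x hx
      have hx' : x ∈ Icc c t₀ := ⟨hx.1, hx.2.trans ht.2⟩
      have habs := hM x hx'
      rw [Real.norm_eq_abs, abs_le, Pi.add_apply] at habs
      have hwx : w x ≤ 0 := hw_nonpos x hx'
      have hbx : b x = bt x := (hbt_eq x (hIci hx)).symm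
      rw [hbx]
      simp only [hw_def] at hwx ⊢
      nlinarith [mul_nonneg (neg_nonneg.2 hwx) (by linarith [habs.1] : (0:ℝ) ≤ a x + bt x + M)]
    have h4 : M/2 * W t = ∫ u in c..t, M/2 * w u := by
      rw [hW_def, intervalIntegral.integral_const_mul]
    rw [h4]
    calc (∫ u in c..t, M/2 * w u) ≤ ∫ u in c..t, (-(1/2)) * (a u + b u) * w u := h3
      _ = -(1/2) * ∫ u in c..t, ((a u)^2 - (b u)^2) := by
          rw [h2, intervalIntegral.integral_const_mul]; ring
      _ ≤ w t - w c := h1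
      _ = w t := by rw [hwc]; ring
  -- Gronwall: g = W * exp(-(M/2) t) is monotone on [c, t₀]
  set g : ℝ → ℝ := fun t => W t * Real.exp (-(M/2) * t) with hg_def
  have hg_deriv : ∀ t : ℝ, HasDerivAt g ((w t - M/2 * W t) * Real.exp (-(M/2) * t)) t := by
    intro t
    have he : HasDerivAt (fun t : ℝ => Real.exp (-(M/2) * t)) (-(M/2) * Real.exp (-(M/2) * t)) t := by
      have := (Real.hasDerivAt_exp (-(M/2) * t)).comp t ((hasDerivAt_id t).const_mul (-(M/2)))
      refine this.congr_deriv ?_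
      ring
    have := (hW_deriv t).mul he
    refine this.congr_deriv ?_
    ring
  have hg_mono : MonotoneOn g (Icc c t₀) := by
    apply monotoneOn_of_deriv_nonneg (convex_Icc c t₀)
    · exact fun x _ => ((hg_deriv x).continuousAt).continuousWithinAt
    · intro x hx
      exact ((hg_deriv x).differentiableAt).differentiableWithinAt
    · intro x hx
      rw [interior_Icc] at hx
      rw [(hg_deriv x).deriv]
      have hk := key x ⟨hx.1.le, hx.2.le⟩
      have : (0:ℝ) ≤ w x - M/2 * W x := by linarith
      positivity
  have h0 : g c ≤ g t₀ := hg_mono (left_mem_Icc.2 hct₀.le) (right_mem_Icc.2 hct₀.le) hct₀.le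
  have hgc : g c = 0 := by
    simp [hg_def, hW_def, intervalIntegral.integral_same]
  have hWt₀ : 0 ≤ W t₀ := by
    have hexp : 0 < Real.exp (-(M/2) * t₀) := Real.exp_pos _
    rw [hgc] at h0
    simp only [hg_def] at h0
    nlinarith [h0]
  have hWneg : W t₀ < 0 := by
    have hpos : 0 < ∫ u in c..t₀, -w u :=
      intervalIntegral_pos_of_pos_on
        ((hw_cont.neg).intervalIntegrable c t₀)
        (fun x hx => neg_pos.2 (hneg x ⟨hx.1, hx.2.le⟩)) hct₀
    rw [intervalIntegral.integral_neg] at hpos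
    simpa [hW_def] using neg_pos.1 (by linarith : -W t₀ > 0)
  linarith

open Set in
/-- Quadratic growth from the Riccati integral inequality (parabolic case): if `A` is `C¹`
and positive on `[r₁, ∞)` with `A' r₁ > 0`, and its logarithmic derivative
`a := A'/A` satisfies `a t - a s ≥ -(1/2)∫ₛᵗ a(u)² du`, then
`A r ≥ A r₁ (1 + (A' r₁/(2 A r₁))(r - r₁))²` for all `r ≥ r₁`; in particular `A` grows at
least quadratically. -/

theorem quadratic_growth_parabolic (r₁ : ℝ) (A A' : ℝ → ℝ)
    (hA_deriv : ∀ r ∈ Set.Ici r₁, HasDerivWithinAt A (A' r) (Set.Ici r₁) r)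
    (hA'_cont : ContinuousOn A' (Set.Ici r₁))
    (hA_pos : ∀ r ∈ Set.Ici r₁, 0 < A r)
    (hA'_pos : 0 < A' r₁)
    (ha_int : ∀ s t : ℝ, r₁ ≤ s → s ≤ t →
      (A' t / A t) - (A' s / A s) ≥ -(1/2) * ∫ u in s..t, (A' u / A u)^2) :
    (∀ r ∈ Set.Ici r₁,
        A r ≥ A r₁ * (1 + (A' r₁ / (2 * A r₁)) * (r - r₁))^2) ∧
      ∃ c > 0, ∃ R ≥ r₁, ∀ r ≥ R, A r ≥ c * r^2 := by
  have hA₁ : 0 < A r₁ := hA_pos r₁ Set.self_mem_Ici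
  set a₁ : ℝ := A' r₁ / A r₁ with ha₁_def
  have ha₁ : 0 < a₁ := div_pos hA'_pos hA₁
  have heq₁ : A' r₁ / (2 * A r₁) = a₁/2 := by
    rw [ha₁_def]; field_simp
  clear_value a₁
  have hA_cont : ContinuousOn A (Set.Ici r₁) := fun r hr =>
    (hA_deriv r hr).continuousWithinAt
  have ha_contOn : ContinuousOn (fun r => A' r / A r) (Set.Ici r₁) :=
    hA'_cont.div hA_cont (fun r hr => (hA_pos r hr).ne')
  set at' : ℝ → ℝ := fun u => A' (max u r₁) / A (max u r₁) with hat_def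
  have hmax_cont : Continuous (fun u : ℝ => max u r₁) := continuous_id.max continuous_const
  have hat_cont : Continuous at' :=
    ha_contOn.comp_continuous hmax_cont (fun u => Set.mem_Ici.2 (le_max_right _ _))
  have hat_eq : ∀ t ≥ r₁, at' t = A' t / A t := by
    intro t ht; simp [hat_def, max_eq_left ht]
  have hat_r₁ : at' r₁ = a₁ := by simp [hat_def]; rw [ha₁_def]
  have hat_ineq : ∀ s t : ℝ, r₁ ≤ s → s ≤ t →
      at' t - at' s ≥ -(1/2) * ∫ u in s..t, (at' u)^2 := by
    intro s t hs hst
    have hcongr : (∫ u in s..t, (at' u)^2) = ∫ u in s..t, (A' u / A u)^2 := by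
      apply intervalIntegral.integral_congr
      intro x hx
      rw [uIcc_of_le hst] at hx
      simp [hat_eq x (hs.trans hx.1)]
    rw [hat_eq t (hs.trans hst), hat_eq s hs, hcongr]
    exact ha_int s t hs hst
  have hcomp := riccati_comp r₁ a₁ at' hat_cont ha₁ hat_r₁ hat_ineq
  -- b(t) ≤ a(t) on Ici r₁
  have hcomp' : ∀ t ≥ r₁, a₁ / (1 + a₁/2 * (t - r₁)) ≤ A' t / A t := by
    intro t ht
    rw [← hat_eq t ht]; exact hcomp t ht
  have hD : ∀ t ≥ r₁, 0 < 1 + a₁/2 * (t - r₁) := by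
    intro t ht; nlinarith [sub_nonneg.2 ht]
  -- Step 2: A r ≥ A r₁ * (1 + a₁/2 (r - r₁))²
  have step2 : ∀ r ∈ Set.Ici r₁, A r₁ * (1 + a₁/2 * (r - r₁))^2 ≤ A r := by
    set f : ℝ → ℝ := fun r => Real.log (A r) - Real.log (A r₁ * (1 + a₁/2 * (r - r₁))^2)
      with hf_def
    have hB_pos : ∀ r ≥ r₁, 0 < A r₁ * (1 + a₁/2 * (r - r₁))^2 := by
      intro r hr
      exact mul_pos hA₁ (pow_pos (hD r hr) 2)
    have hf_deriv : ∀ x ∈ Set.Ioi r₁,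
        HasDerivAt f (A' x / A x - a₁ / (1 + a₁/2 * (x - r₁))) x := by
      intro x hx
      have hxIci : x ∈ Set.Ici r₁ := Set.mem_Ici.2 (le_of_lt hx)
      have hA_at : HasDerivAt A (A' x) x :=
        (hA_deriv x hxIci).hasDerivAt (Ici_mem_nhds hx)
      have hlogA : HasDerivAt (fun r => Real.log (A r)) (A' x / A x) x :=
        hA_at.log (hA_pos x hxIci).ne'
      have hDd : HasDerivAt (fun r : ℝ => 1 + a₁/2 * (r - r₁)) (a₁/2) x := by
        simpa using (((hasDerivAt_id x).sub_const r₁).const_mul (a₁/2)).const_add 1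
      have hB : HasDerivAt (fun r => A r₁ * (1 + a₁/2 * (r - r₁))^2)
          (A r₁ * (2 * (1 + a₁/2 * (x - r₁)) * (a₁/2))) x := by
        have := (hDd.pow 2).const_mul (A r₁)
        refine this.congr_deriv ?_
        ring
      have hlogB : HasDerivAt (fun r => Real.log (A r₁ * (1 + a₁/2 * (r - r₁))^2))
          (A r₁ * (2 * (1 + a₁/2 * (x - r₁)) * (a₁/2)) / (A r₁ * (1 + a₁/2 * (x - r₁))^2)) x :=
        hB.log (hB_pos x hxIci).ne'
      have hDx := hD x hxIci
      have hsimp : A r₁ * (2 * (1 + a₁/2 * (x - r₁)) * (a₁/2)) / (A r₁ * (1 + a₁/2 * (x - r₁))^2)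
          = a₁ / (1 + a₁/2 * (x - r₁)) := by
        rw [mul_div_mul_left _ _ hA₁.ne']
        rw [show (2 * (1 + a₁/2 * (x - r₁)) * (a₁/2)) = a₁ * (1 + a₁/2 * (x - r₁)) by ring,
          pow_two, mul_div_mul_right _ _ hDx.ne']
      have := hlogA.sub hlogB
      rw [hsimp] at this
      exact this
    have hf_cont : ContinuousOn f (Set.Ici r₁) := by
      apply ContinuousOn.sub
      · exact ContinuousOn.log hA_cont (fun r hr => (hA_pos r hr).ne')
      · apply ContinuousOn.log
        · fun_prop
        · intro r hr
          exact (hB_pos r hr).ne'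
    have hf_mono : MonotoneOn f (Set.Ici r₁) := by
      apply monotoneOn_of_deriv_nonneg (convex_Ici r₁) hf_cont
      · intro x hx
        rw [interior_Ici] at hx
        exact ((hf_deriv x hx).differentiableAt).differentiableWithinAt
      · intro x hx
        rw [interior_Ici] at hx
        rw [(hf_deriv x hx).deriv]
        have := hcomp' x (le_of_lt hx)
        linarith
    intro r hr
    have hfr : f r₁ ≤ f r := hf_mono (self_mem_Ici) hr hr
    have hfr₁ : f r₁ = 0 := by
      simp [hf_def]
    rw [hfr₁] at hfr
    have : Real.log (A r₁ * (1 + a₁/2 * (r - r₁))^2) ≤ Real.log (A r) := by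
      simp only [hf_def] at hfr; linarith
    exact (Real.log_le_log_iff (hB_pos r hr) (hA_pos r hr)).1 this
  constructor
  · intro r hr
    have := step2 r hr
    rw [heq₁]
    exact this
  · refine ⟨A r₁ * (a₁/4)^2, by positivity, max r₁ (2 * |r₁|), le_max_left _ _, ?_⟩
    intro r hrR
    have hr₁ : r₁ ≤ r := (le_max_left _ _).trans hrR
    have hr2 : 2 * |r₁| ≤ r := (le_max_right _ _).trans hrR
    have hr0 : 0 ≤ r := le_trans (by positivity) hr2
    have hD1 : a₁/4 * r ≤ 1 + a₁/2 * (r - r₁) := by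
      have h1 : r₁ ≤ |r₁| := le_abs_self r₁
      nlinarith [ha₁.le]
    have hrq : (a₁/4 * r)^2 ≤ (1 + a₁/2 * (r - r₁))^2 := by
      have h0 : 0 ≤ a₁/4 * r := by positivity
      nlinarith
    have := step2 r hr₁
    calc A r₁ * (a₁/4)^2 * r^2 = A r₁ * (a₁/4 * r)^2 := by ring
      _ ≤ A r₁ * (1 + a₁/2 * (r - r₁))^2 := by nlinarith [hA₁]
      _ ≤ A r := this
end

section
/- Let r₀ > 0, C > 0, and let A : [r₀,∞) → ℝ be twice differentiable with A(r) > 0, with 2 A(r) A''(r) ≥ (A'(r))² for all r ≥ r₀, and with the linear upper bound A(r) ≤ C r for all r ≥ r₀. Then A'(r) ≤ 0 for all r ≥ r₀. -/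
private lemma mono_aux (b : ℝ) (f f' : ℝ → ℝ)
    (hf : ∀ r ∈ Set.Ici b, HasDerivWithinAt f (f' r) (Set.Ici b) r)
    (h0 : ∀ r ∈ Set.Ici b, 0 ≤ f' r) : MonotoneOn f (Set.Ici b) := by
  apply monotoneOn_of_deriv_nonneg (convex_Ici b)
  · intro x hx; exact (hf x hx).continuousWithinAt
  · rw [interior_Ici]; intro x hx
    exact (((hf x (Set.mem_Ici.mpr (le_of_lt hx))).hasDerivAt (Ici_mem_nhds hx)).differentiableAt).differentiableWithinAt
  · rw [interior_Ici]; intro x hx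
    rw [((hf x (Set.mem_Ici.mpr (le_of_lt hx))).hasDerivAt (Ici_mem_nhds hx)).deriv]
    exact h0 x (Set.mem_Ici.mpr (le_of_lt hx))

/-- If `A` is twice differentiable and positive on `[r₀, ∞)` (with `r₀ > 0`), satisfies
`2 A A'' ≥ (A')²`, and is bounded above by a linear function `C r`, then `A' ≤ 0` on
`[r₀, ∞)`. -/
theorem deriv_nonpos_of_linear_bound (r₀ C : ℝ) (hr₀ : 0 < r₀) (hC : 0 < C)
    (A A' A'' : ℝ → ℝ)
    (hA_deriv : ∀ r ∈ Set.Ici r₀, HasDerivWithinAt A (A' r) (Set.Ici r₀) r)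
    (hA'_deriv : ∀ r ∈ Set.Ici r₀, HasDerivWithinAt A' (A'' r) (Set.Ici r₀) r)
    (hA_pos : ∀ r ∈ Set.Ici r₀, 0 < A r)
    (h_ineq : ∀ r ∈ Set.Ici r₀, 2 * A r * A'' r ≥ (A' r)^2)
    (h_lin : ∀ r ∈ Set.Ici r₀, A r ≤ C * r) :
    ∀ r ∈ Set.Ici r₀, A' r ≤ 0 := by
  by_contra h
  push_neg at h
  obtain ⟨a, ha, hc⟩ := h
  set c := A' a with hc_def
  have ha0 : (0:ℝ) < a := lt_of_lt_of_le hr₀ ha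
  -- A'' ≥ 0 on Ici r₀
  have hA''nn : ∀ r ∈ Set.Ici r₀, 0 ≤ A'' r := by
    intro r hr
    have h1 := h_ineq r hr
    have h2 := hA_pos r hr
    nlinarith [sq_nonneg (A' r)]
  -- A' monotone on Ici r₀
  have hmonoA' : MonotoneOn A' (Set.Ici r₀) := mono_aux r₀ A' A'' hA'_deriv hA''nn
  -- A' ≥ c on Ici a
  have hA'ge : ∀ r ∈ Set.Ici a, c ≤ A' r := fun r hr =>
    hmonoA' ha (Set.mem_Ici.mpr (le_trans ha hr)) hr
  -- ψ := A' - (c^2/(2C)) log is monotone on Ici a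
  have hsub : Set.Ici a ⊆ Set.Ici r₀ := Set.Ici_subset_Ici.mpr ha
  have hψ : MonotoneOn (fun r => A' r - c^2/(2*C) * Real.log r) (Set.Ici a) := by
    apply mono_aux a _ (fun r => A'' r - c^2/(2*C) * (1/r))
    · intro r hr
      have hr0 : (0:ℝ) < r := lt_of_lt_of_le ha0 hr
      exact ((hA'_deriv r (hsub hr)).mono hsub).sub
        (((Real.hasDerivAt_log (ne_of_gt hr0)).const_mul (c^2/(2*C))).hasDerivWithinAt.congr_deriv
          (by ring))
    · intro r hr
      have hr0 : (0:ℝ) < r := lt_of_lt_of_le ha0 hr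
      have h1 := h_ineq r (hsub hr)
      have h2 := hA_pos r (hsub hr)
      have h3 := h_lin r (hsub hr)
      have h4 := hA'ge r hr
      have h5 := hA''nn r (hsub hr)
      have hc2 : c^2 ≤ (A' r)^2 := by nlinarith
      have key : c^2 ≤ 2*C*r*A'' r := by nlinarith
      rw [sub_nonneg, show c^2/(2*C)*(1/r) = c^2/(2*C*r) by field_simp,
        div_le_iff₀ (by positivity)]
      nlinarith
  -- pick r₁ with A' r₁ ≥ C + 1
  set r₁ := a * Real.exp (2*C*(C+1)/c^2) with hr₁def
  have hexp1 : (1:ℝ) ≤ Real.exp (2*C*(C+1)/c^2) :=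
    Real.one_le_exp (by positivity)
  have hr₁a : a ≤ r₁ := le_mul_of_one_le_right ha0.le hexp1
  have hr₁0 : 0 < r₁ := lt_of_lt_of_le ha0 hr₁a
  have hlogr₁ : Real.log r₁ = Real.log a + 2*C*(C+1)/c^2 := by
    rw [hr₁def, Real.log_mul (ne_of_gt ha0) (by positivity), Real.log_exp]
  have hA'r₁ : C + 1 ≤ A' r₁ := by
    have hmono := hψ (Set.self_mem_Ici) hr₁a hr₁a
    simp only [hlogr₁] at hmono
    have heq : c^2/(2*C) * (Real.log a + 2*C*(C+1)/c^2)
        = c^2/(2*C) * Real.log a + (C + 1) := by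
      field_simp
    linarith [hmono, heq, hc]
  -- A' ≥ C+1 on Ici r₁
  have hA'big : ∀ r ∈ Set.Ici r₁, C + 1 ≤ A' r := by
    intro r hr
    exact le_trans hA'r₁ (hmonoA' (le_trans ha hr₁a) (le_trans (le_trans ha hr₁a) hr) hr)
  have hsub2 : Set.Ici r₁ ⊆ Set.Ici r₀ := Set.Ici_subset_Ici.mpr (le_trans ha hr₁a)
  -- φ := A - (C+1)*id monotone on Ici r₁
  have hφ : MonotoneOn (fun r => A r - (C+1)*r) (Set.Ici r₁) := by
    apply mono_aux r₁ _ (fun r => A' r - (C+1))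
    · intro r hr
      exact ((hA_deriv r (hsub2 hr)).mono hsub2).sub
        (((hasDerivAt_id r).const_mul (C+1)).hasDerivWithinAt.congr_deriv (by ring))
    · intro r hr
      linarith [hA'big r hr]
  -- contradiction at r = (C+1)*r₁ + 1
  set R := (C+1)*r₁ + 1 with hRdef
  have hRr₁ : r₁ ≤ R := by nlinarith
  have hgrow := hφ (Set.self_mem_Ici) hRr₁ hRr₁
  simp only at hgrow
  have hAr₁ : 0 < A r₁ := hA_pos r₁ (hsub2 Set.self_mem_Ici)
  have hlinR := h_lin R (hsub2 hRr₁)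
  nlinarith
end

section
/- Comparison estimate on logarithmic scales (nonparabolic case): let 0 < r₁ ≤ r₂ and let a : [r₁,r₂] → ℝ be continuous with 0 ≤ a(r) ≤ 2 for all r ∈ [r₁,r₂], satisfying a(t) − a(s) ≥ ∫ₛᵗ (1 − a(u)²/4) · (du/u) for all r₁ ≤ s ≤ t ≤ r₂. Then a(r₂) ≥ 2 + √(r₁/r₂) · (a(r₁) − 2). -/
open intervalIntegral

/-- Comparison estimate on logarithmic scales (nonparabolic case): if `a` is continuous
on `[r₁, r₂]` (with `0 < r₁ ≤ r₂`), takes values in `[0, 2]`, and satisfies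
`a t - a s ≥ ∫ₛᵗ (1 - a(u)²/4) du/u`, then `a r₂ ≥ 2 + √(r₁/r₂) (a r₁ - 2)`. -/
theorem log_scale_comparison (r₁ r₂ : ℝ) (hr₁ : 0 < r₁) (hr₁₂ : r₁ ≤ r₂) (a : ℝ → ℝ)
    (ha_cont : ContinuousOn a (Set.Icc r₁ r₂))
    (ha_bounds : ∀ r ∈ Set.Icc r₁ r₂, 0 ≤ a r ∧ a r ≤ 2)
    (ha_int : ∀ s t : ℝ, r₁ ≤ s → s ≤ t → t ≤ r₂ →
      a t - a s ≥ ∫ u in s..t, (1 - (a u)^2 / 4) / u) :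
    a r₂ ≥ 2 + Real.sqrt (r₁ / r₂) * (a r₁ - 2) := by
  have hr₂ : 0 < r₂ := lt_of_lt_of_le hr₁ hr₁₂
  -- projection onto [r₁, r₂]
  set p : ℝ → ℝ := fun x => max r₁ (min x r₂) with hp_def
  have hp_cont : Continuous p := continuous_const.max (continuous_id.min continuous_const)
  have hp_mem : ∀ x, p x ∈ Set.Icc r₁ r₂ := fun x =>
    ⟨le_max_left _ _, max_le hr₁₂ (min_le_right x r₂)⟩
  have hp_icc : ∀ x ∈ Set.Icc r₁ r₂, p x = x := by
    intro x hx
    simp only [hp_def]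
    rw [min_eq_left hx.2, max_eq_right hx.1]
  set b : ℝ → ℝ := fun u => 2 - a (p u) with hb_def
  have hb_cont : Continuous b :=
    continuous_const.sub (ha_cont.comp_continuous hp_cont hp_mem)
  have hpx_pos : ∀ x, 0 < p x := fun x => lt_of_lt_of_le hr₁ (hp_mem x).1
  set g : ℝ → ℝ := fun u => b u / (2 * p u) with hg_def
  have hg_cont : Continuous g :=
    hb_cont.div (continuous_const.mul hp_cont) (fun x => by have := hpx_pos x; positivity)
  set B : ℝ → ℝ := fun t => ∫ u in r₁..t, g u with hB_def
  have hB : ∀ t, HasDerivAt B (g t) t := fun t =>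
    (hg_cont.integral_hasStrictDerivAt r₁ t).hasDerivAt
  have hB_cont : Continuous B := by
    rw [continuous_iff_continuousAt]; exact fun t => (hB t).continuousAt
  -- b t + B t is nonincreasing
  have hC : ∀ s t, r₁ ≤ s → s ≤ t → t ≤ r₂ → b t + B t ≤ b s + B s := by
    intro s t hs hst ht
    have hsub : Set.Icc s t ⊆ Set.Icc r₁ r₂ := Set.Icc_subset_Icc hs ht
    have hint : a t - a s ≥ ∫ u in s..t, (1 - (a u)^2 / 4) / u := ha_int s t hs hst ht
    have hBst : B t - B s = ∫ u in s..t, g u := by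
      have h1 : IntervalIntegrable g MeasureTheory.volume r₁ s :=
        hg_cont.intervalIntegrable _ _
      have h2 : IntervalIntegrable g MeasureTheory.volume s t :=
        hg_cont.intervalIntegrable _ _
      have h3 := intervalIntegral.integral_add_adjacent_intervals h1 h2
      simp only [hB_def]
      linarith [h3]
    have hmono : (∫ u in s..t, g u) ≤ ∫ u in s..t, (1 - (a u)^2 / 4) / u := by
      apply intervalIntegral.integral_mono_on hst (hg_cont.intervalIntegrable _ _)
      · apply ContinuousOn.intervalIntegrable
        rw [Set.uIcc_of_le hst]
        apply ContinuousOn.div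
        · exact continuousOn_const.sub (((ha_cont.mono hsub).pow 2).div_const 4)
        · exact continuousOn_id
        · intro u hu
          exact ne_of_gt (lt_of_lt_of_le hr₁ (hsub hu).1)
      · intro u hu
        have hu' := hsub hu
        have hu0 : 0 < u := lt_of_lt_of_le hr₁ hu'.1
        have hpu : p u = u := hp_icc u hu'
        have hab := ha_bounds u hu'
        show b u / (2 * p u) ≤ (1 - (a u)^2 / 4) / u
        simp only [hb_def, hpu]
        rw [div_le_div_iff₀ (by positivity) hu0]
        nlinarith [mul_nonneg (mul_nonneg hu0.le hab.1) (sub_nonneg.2 hab.2)]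
    have hbs : b s = 2 - a s := by
      simp only [hb_def, hp_icc s ⟨hs, hst.trans ht⟩]
    have hbt : b t = 2 - a t := by
      simp only [hb_def, hp_icc t ⟨hs.trans hst, ht⟩]
    linarith
  set C₂ : ℝ := b r₂ + B r₂ with hC₂_def
  set H : ℝ → ℝ := fun u => Real.sqrt u * B u - C₂ * Real.sqrt u with hH_def
  have hHd : ∀ u, 0 < u → u ∈ Set.Icc r₁ r₂ →
      HasDerivAt H ((B u + b u - C₂) / (2 * Real.sqrt u)) u := by
    intro u hu0 hu
    have hsq : Real.sqrt u * Real.sqrt u = u := Real.mul_self_sqrt hu0.le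
    have hsu : Real.sqrt u ≠ 0 := by positivity
    have h1 : HasDerivAt Real.sqrt (1 / (2 * Real.sqrt u)) u := Real.hasDerivAt_sqrt hu0.ne'
    have h2 := (h1.mul (hB u)).sub ((h1.const_mul C₂))
    refine h2.congr_deriv ?_
    have hpu : p u = u := hp_icc u hu
    have hgu : g u = b u / (2 * u) := by simp only [hg_def, hpu]
    have h3 : Real.sqrt u * (b u / (2 * u)) = b u / (2 * Real.sqrt u) := by
      field_simp
      linear_combination (2 - a (p u)) * hsq
    rw [hgu, h3]
    ring
  have hH_mono : MonotoneOn H (Set.Icc r₁ r₂) := by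
    apply monotoneOn_of_deriv_nonneg (convex_Icc r₁ r₂)
    · exact ((Real.continuous_sqrt.mul hB_cont).sub
        (continuous_const.mul Real.continuous_sqrt)).continuousOn
    · intro u hu
      rw [interior_Icc] at hu
      exact (hHd u (lt_trans hr₁ hu.1) ⟨hu.1.le, hu.2.le⟩).differentiableAt.differentiableWithinAt
    · intro u hu
      rw [interior_Icc] at hu
      have hu0 : 0 < u := lt_trans hr₁ hu.1
      rw [(hHd u hu0 ⟨hu.1.le, hu.2.le⟩).deriv]
      apply div_nonneg _ (by positivity)
      have := hC u r₂ hu.1.le hu.2.le le_rfl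
      linarith
  have hkey : H r₁ ≤ H r₂ := hH_mono (Set.left_mem_Icc.2 hr₁₂) (Set.right_mem_Icc.2 hr₁₂) hr₁₂
  have hBr₁ : B r₁ = 0 := by simp [hB_def]
  set s1 := Real.sqrt r₁ with hs1
  set s2 := Real.sqrt r₂ with hs2
  have hs1pos : 0 < s1 := Real.sqrt_pos.2 hr₁
  have hs2pos : 0 < s2 := Real.sqrt_pos.2 hr₂
  -- from hkey : s1 * B r₁ - C₂ * s1 ≤ s2 * B r₂ - C₂ * s2
  have hkey' : s2 * (b r₂) ≤ s1 * C₂ := by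
    simp only [hH_def, hBr₁] at hkey
    have : C₂ - B r₂ = b r₂ := by simp only [hC₂_def]; ring
    nlinarith [hkey]
  have hC₂le : C₂ ≤ b r₁ := by
    have := hC r₁ r₂ le_rfl hr₁₂ le_rfl
    simp only [hC₂_def]
    linarith [hBr₁ ▸ this]
  have hfinal : s2 * b r₂ ≤ s1 * b r₁ :=
    le_trans hkey' (mul_le_mul_of_nonneg_left hC₂le hs1pos.le)
  have hbr1 : b r₁ = 2 - a r₁ := by
    simp only [hb_def, hp_icc r₁ (Set.left_mem_Icc.2 hr₁₂)]
  have hbr2 : b r₂ = 2 - a r₂ := by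
    simp only [hb_def, hp_icc r₂ (Set.right_mem_Icc.2 hr₁₂)]
  rw [hbr1, hbr2] at hfinal
  have hdiv : Real.sqrt (r₁ / r₂) = s1 / s2 := Real.sqrt_div hr₁.le r₂
  rw [ge_iff_le, hdiv]
  have h4 : s2 * (s1 / s2 * (a r₁ - 2)) = s1 * (a r₁ - 2) := by field_simp
  nlinarith [hfinal, h4, hs2pos]
end

section
/- Let r₀ > 0 and let a : [r₀,∞) → ℝ be continuous with a(r) ≥ 0 for all r ≥ r₀, satisfying a(t) − a(s) ≥ ∫ₛᵗ (1 − a(u)²/4) · (du/u) for all r₀ ≤ s ≤ t. Set c := max(0, (2 − a(r₀)) · √(r₀)). Then a(r) ≥ 2 − c/√r for all r ≥ r₀. -/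
open intervalIntegral

/-- If `a` is continuous and nonnegative on `[r₀, ∞)` (with `r₀ > 0`) and satisfies
`a t - a s ≥ ∫ₛᵗ (1 - a(u)²/4) du/u`, then with `c := max 0 ((2 - a r₀) √r₀)` one has
`a r ≥ 2 - c/√r` for all `r ≥ r₀`. -/
theorem log_scale_lower_bound (r₀ : ℝ) (hr₀ : 0 < r₀) (a : ℝ → ℝ)
    (ha_cont : ContinuousOn a (Set.Ici r₀))
    (ha_nonneg : ∀ r ∈ Set.Ici r₀, 0 ≤ a r)
    (ha_int : ∀ s t : ℝ, r₀ ≤ s → s ≤ t →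
      a t - a s ≥ ∫ u in s..t, (1 - (a u)^2 / 4) / u) :
    ∀ r ∈ Set.Ici r₀,
      a r ≥ 2 - max 0 ((2 - a r₀) * Real.sqrt r₀) / Real.sqrt r := by
  set c := max 0 ((2 - a r₀) * Real.sqrt r₀) with hc
  have hc0 : 0 ≤ c := le_max_left _ _
  have hsr₀ : 0 < Real.sqrt r₀ := Real.sqrt_pos.mpr hr₀
  have ha₀ : 0 ≤ a r₀ := ha_nonneg r₀ (Set.mem_Ici.mpr le_rfl)
  have hcle : c ≤ 2 * Real.sqrt r₀ := by
    apply max_le (by positivity)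
    nlinarith
  have hb_r₀ : 2 - c / Real.sqrt r₀ ≤ a r₀ := by
    have h1 : (2 - a r₀) * Real.sqrt r₀ ≤ c := le_max_right _ _
    have h2 : 2 - a r₀ ≤ c / Real.sqrt r₀ := by
      rw [le_div_iff₀ hsr₀]; exact h1
    linarith
  -- the comparison function
  set b : ℝ → ℝ := fun u => 2 - c / Real.sqrt u with hb
  have hb_cont : ∀ u : ℝ, r₀ ≤ u → ContinuousAt b u := by
    intro u hu
    have hu0 : 0 < u := lt_of_lt_of_le hr₀ hu
    have : Real.sqrt u ≠ 0 := ne_of_gt (Real.sqrt_pos.mpr hu0)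
    exact (continuousAt_const.sub (continuousAt_const.div
      (Real.continuous_sqrt.continuousAt) this))
  intro r hr
  rw [Set.mem_Ici] at hr
  by_contra hlt
  push_neg at hlt
  have hfr : a r < b r := hlt
  have hbr₀' : b r₀ ≤ a r₀ := hb_r₀
  have hr_ne : r₀ < r := by
    rcases lt_or_eq_of_le hr with h | h
    · exact h
    · exfalso; rw [← h] at hfr; exact absurd hbr₀' (not_le.mpr hfr)
  set S := {u : ℝ | u ∈ Set.Icc r₀ r ∧ b u ≤ a u} with hS
  have hSne : S.Nonempty := ⟨r₀, ⟨le_rfl, hr⟩, hbr₀'⟩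
  have hSbdd : BddAbove S := ⟨r, fun u hu => hu.1.2⟩
  have hSclosed : IsClosed S := by
    have hcont : ContinuousOn (fun u => a u - b u) (Set.Icc r₀ r) := by
      apply ContinuousOn.sub (ha_cont.mono (Set.Icc_subset_Ici_self))
      intro u hu
      exact (hb_cont u hu.1).continuousWithinAt
    have : S = Set.Icc r₀ r ∩ (fun u => a u - b u) ⁻¹' Set.Ici 0 := by
      ext u; simp [hS, Set.mem_Icc, sub_nonneg, and_comm]
    rw [this]
    exact hcont.preimage_isClosed_of_isClosed isClosed_Icc isClosed_Ici
  set s := sSup S with hs_def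
  have hsS : s ∈ S := hSclosed.csSup_mem hSne hSbdd
  have hsr₀' : r₀ ≤ s := hsS.1.1
  have hsle : s ≤ r := hsS.1.2
  have hs0 : 0 < s := lt_of_lt_of_le hr₀ hsr₀'
  have hsub : ∀ u, s < u → u ≤ r → a u < b u := by
    intro u hsu hur
    by_contra h
    push_neg at h
    have : u ∈ S := ⟨⟨hsr₀'.trans hsu.le, hur⟩, h⟩
    exact absurd (le_csSup hSbdd this) (not_le.mpr hsu)
  have hsr : s < r := by
    rcases lt_or_eq_of_le hsle with h | h
    · exact h
    · exfalso; rw [h] at hsS; exact absurd hsS.2 (not_le.mpr hfr)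
  -- a s = b s
  have hs_le : a s - b s ≤ 0 := by
    have htend : Filter.Tendsto (fun u => a u - b u) (nhdsWithin s (Set.Ioi s))
        (nhds (a s - b s)) := by
      have h1 : ContinuousWithinAt (fun u => a u - b u) (Set.Ici r₀) s :=
        (ha_cont s hsr₀').sub (hb_cont s hsr₀').continuousWithinAt
      exact h1.tendsto.mono_left (nhdsWithin_mono s (fun x hx => hsr₀'.trans (le_of_lt hx)))
    have hev : ∀ᶠ u in nhdsWithin s (Set.Ioi s), a u - b u ≤ 0 := by
      have h1 : ∀ᶠ u in nhdsWithin s (Set.Ioi s), u < r :=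
        eventually_nhdsWithin_of_eventually_nhds (eventually_lt_nhds hsr)
      filter_upwards [h1, self_mem_nhdsWithin] with u hur hu
      exact (sub_neg.mpr (hsub u hu hur.le)).le
    exact le_of_tendsto htend hev
  have hs_eq : a s = b s := le_antisymm (by linarith) hsS.2
  have hab : ∀ u ∈ Set.Icc s r, a u ≤ b u := by
    intro u hu
    rcases eq_or_lt_of_le hu.1 with h | h
    · rw [← h]; exact hs_eq.le
    · exact (hsub u h hu.2).le
  -- pointwise integrand bound
  have hkey : ∀ u ∈ Set.Icc s r, c / (2 * u * Real.sqrt u) ≤ (1 - (a u)^2 / 4) / u := by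
    intro u hu
    have hu0 : 0 < u := lt_of_lt_of_le hs0 hu.1
    have hq : 0 < Real.sqrt u := Real.sqrt_pos.mpr hu0
    have hq2 : Real.sqrt u ^ 2 = u := Real.sq_sqrt hu0.le
    have hcu : c ≤ 2 * Real.sqrt u := by
      have := Real.sqrt_le_sqrt (le_trans hsr₀' hu.1 : r₀ ≤ u)
      linarith [hcle]
    have ha0 : 0 ≤ a u := ha_nonneg u (hsr₀'.trans hu.1)
    have hab' : a u ≤ 2 - c / Real.sqrt u := hab u hu
    have h1 : a u * Real.sqrt u ≤ 2 * Real.sqrt u - c := by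
      have h2 := mul_le_mul_of_nonneg_right hab' hq.le
      rw [sub_mul, div_mul_cancel₀ _ (ne_of_gt hq)] at h2
      linarith
    rw [div_le_div_iff₀ (by positivity) hu0]
    have hAq : 0 ≤ a u * Real.sqrt u := mul_nonneg ha0 hq.le
    have h1sq : (a u * Real.sqrt u) ^ 2 ≤ (2 * Real.sqrt u - c) ^ 2 := by
      nlinarith
    nlinarith [mul_le_mul_of_nonneg_right h1sq hq.le,
      mul_nonneg (mul_nonneg hc0 hq.le) (sub_nonneg.mpr hcu), hq2, sq_nonneg (a u), hq.le]
  -- integrability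
  have hcont_a : ContinuousOn (fun u => (1 - (a u)^2 / 4) / u) (Set.Icc s r) := by
    apply ContinuousOn.div
    · exact continuousOn_const.sub (((ha_cont.mono (Set.Icc_subset_Ici_self.trans (Set.Ici_subset_Ici.mpr hsr₀'))).pow 2).div_const 4)
    · exact continuousOn_id
    · intro u hu; exact ne_of_gt (lt_of_lt_of_le hs0 hu.1)
  have hcont_g : ContinuousOn (fun u => c / (2 * u * Real.sqrt u)) (Set.Icc s r) := by
    apply ContinuousOn.div continuousOn_const
    · exact (continuousOn_const.mul continuousOn_id).mul Real.continuous_sqrt.continuousOn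
    · intro u hu
      have hu0 : 0 < u := lt_of_lt_of_le hs0 hu.1
      have := Real.sqrt_pos.mpr hu0
      positivity
  have hint1 : IntervalIntegrable (fun u => (1 - (a u)^2 / 4) / u) MeasureTheory.volume s r := by
    apply ContinuousOn.intervalIntegrable
    rwa [Set.uIcc_of_le hsr.le]
  have hint2 : IntervalIntegrable (fun u => c / (2 * u * Real.sqrt u)) MeasureTheory.volume s r := by
    apply ContinuousOn.intervalIntegrable
    rwa [Set.uIcc_of_le hsr.le]
  have hmono := intervalIntegral.integral_mono_on hsr.le hint2 hint1 hkey
  -- FTC for b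
  have hftc : (∫ u in s..r, c / (2 * u * Real.sqrt u)) = b r - b s := by
    apply intervalIntegral.integral_eq_sub_of_hasDerivAt
    · intro x hx
      rw [Set.uIcc_of_le hsr.le] at hx
      have hx0 : 0 < x := lt_of_lt_of_le hs0 hx.1
      have hqx : 0 < Real.sqrt x := Real.sqrt_pos.mpr hx0
      have hqx2 : Real.sqrt x ^ 2 = x := Real.sq_sqrt hx0.le
      have hder : HasDerivAt (fun u => c / Real.sqrt u)
          ((0 * Real.sqrt x - c * (1 / (2 * Real.sqrt x))) / (Real.sqrt x) ^ 2) x :=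
        (hasDerivAt_const x c).div (Real.hasDerivAt_sqrt (ne_of_gt hx0)) (ne_of_gt hqx)
      have hD := (hasDerivAt_const x (2:ℝ)).sub hder
      have heq : (0:ℝ) - (0 * Real.sqrt x - c * (1 / (2 * Real.sqrt x))) / (Real.sqrt x) ^ 2
          = c / (2 * x * Real.sqrt x) := by
        rw [hqx2]
        field_simp
        ring
      exact heq ▸ hD
    · exact hint2
  have hai := ha_int s r hsr₀' hsr.le
  rw [hftc] at hmono
  have h1 : b r - b s ≤ a r - a s := le_trans hmono hai
  linarith [h1, hs_eq, hfr]
end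

section
/- Let r₀ > 0, c ≥ 0, and let A : [r₀,∞) → ℝ be differentiable with A(r) > 0 for all r ≥ r₀ and r · A'(r) ≥ (2 − c/√r) · A(r) for all r ≥ r₀. Then A(r) ≥ A(r₀) · (r/r₀)² · exp(−2c/√(r₀)) for all r ≥ r₀. -/
/-- If `A > 0` is differentiable on `[r₀, ∞)` (with `r₀ > 0`) and satisfies
`r A' r ≥ (2 - c/√r) A r` with `c ≥ 0`, then
`A r ≥ A r₀ (r/r₀)² exp(-2c/√r₀)` for all `r ≥ r₀`. -/
theorem growth_from_log_scale_derivative_bound (r₀ c : ℝ) (hr₀ : 0 < r₀) (hc : 0 ≤ c)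
    (A A' : ℝ → ℝ)
    (hA_deriv : ∀ r ∈ Set.Ici r₀, HasDerivWithinAt A (A' r) (Set.Ici r₀) r)
    (hA_pos : ∀ r ∈ Set.Ici r₀, 0 < A r)
    (hA'_ge : ∀ r ∈ Set.Ici r₀, r * A' r ≥ (2 - c / Real.sqrt r) * A r) :
    ∀ r ∈ Set.Ici r₀,
      A r ≥ A r₀ * (r / r₀)^2 * Real.exp (-2 * c / Real.sqrt r₀) := by
  set g : ℝ → ℝ := fun x => Real.log (A x) - 2 * Real.log x - 2 * c / Real.sqrt x with hg
  set g' : ℝ → ℝ := fun x =>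
    A' x / A x - 2 * x⁻¹ - 2 * c * (-(1 / (2 * Real.sqrt x)) / Real.sqrt x ^ 2) with hg'
  have hint : interior (Set.Ici r₀) = Set.Ioi r₀ := interior_Ici
  have hcontA : ContinuousOn A (Set.Ici r₀) := fun x hx =>
    (hA_deriv x hx).continuousWithinAt
  have hgderiv : ∀ x ∈ interior (Set.Ici r₀),
      HasDerivWithinAt g (g' x) (interior (Set.Ici r₀)) x := by
    intro x hx
    rw [hint] at hx ⊢
    have hx0 : 0 < x := lt_trans hr₀ hx
    have hs : 0 < Real.sqrt x := Real.sqrt_pos.2 hx0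
    have hAx : 0 < A x := hA_pos x (Set.mem_Ici.2 (le_of_lt hx))
    have hd1 : HasDerivWithinAt (fun y => Real.log (A y)) (A' x / A x) (Set.Ioi r₀) x :=
      (((hA_deriv x (Set.mem_Ici.2 (le_of_lt hx))).mono (Set.Ioi_subset_Ici le_rfl)).log hAx.ne')
    have hd2 : HasDerivWithinAt (fun y => 2 * Real.log y) (2 * x⁻¹) (Set.Ioi r₀) x :=
      ((Real.hasDerivAt_log hx0.ne').hasDerivWithinAt.const_mul 2)
    have hd3 : HasDerivWithinAt (fun y => 2 * c / Real.sqrt y)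
        (2 * c * (-(1 / (2 * Real.sqrt x)) / Real.sqrt x ^ 2)) (Set.Ioi r₀) x := by
      have h := ((Real.hasDerivAt_sqrt hx0.ne').hasDerivWithinAt
        (s := Set.Ioi r₀)).inv hs.ne'
      have h2 := h.const_mul (2 * c)
      simpa [div_eq_mul_inv] using h2
    have H := (hd1.sub hd2).sub hd3
    exact H
  have hgnonneg : ∀ x ∈ interior (Set.Ici r₀), 0 ≤ g' x := by
    intro x hx
    rw [hint] at hx
    have hx0 : 0 < x := lt_trans hr₀ hx
    have hs : 0 < Real.sqrt x := Real.sqrt_pos.2 hx0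
    have hs2 : Real.sqrt x ^ 2 = x := Real.sq_sqrt hx0.le
    have hAx : 0 < A x := hA_pos x (Set.mem_Ici.2 (le_of_lt hx))
    have h1 := hA'_ge x (Set.mem_Ici.2 (le_of_lt hx))
    have heq : g' x = (x * A' x - (2 - c / Real.sqrt x) * A x) / (x * A x) := by
      rw [hg']
      field_simp
      linear_combination (-(A x * c)) * hs2
      
    rw [heq]
    exact div_nonneg (sub_nonneg.2 h1) (mul_pos hx0 hAx).le
  have hcontg : ContinuousOn g (Set.Ici r₀) := by
    apply ContinuousOn.sub
    apply ContinuousOn.sub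
    · exact ContinuousOn.log hcontA (fun x hx => (hA_pos x hx).ne')
    · exact ContinuousOn.mul continuousOn_const
        (Real.continuousOn_log.mono (fun x hx => ne_of_gt (lt_of_lt_of_le hr₀ hx)))
    · exact ContinuousOn.div continuousOn_const
        (Real.continuous_sqrt.continuousOn)
        (fun x hx => (Real.sqrt_pos.2 (lt_of_lt_of_le hr₀ hx)).ne')
  have hmono : MonotoneOn g (Set.Ici r₀) :=
    monotoneOn_of_hasDerivWithinAt_nonneg (convex_Ici r₀) hcontg hgderiv hgnonneg
  intro r hr
  have hr0 : 0 < r := lt_of_lt_of_le hr₀ hr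
  have hAr : 0 < A r := hA_pos r hr
  have hAr₀ : 0 < A r₀ := hA_pos r₀ (Set.mem_Ici.2 le_rfl)
  have hsr : 0 < Real.sqrt r := Real.sqrt_pos.2 hr0
  have hsr₀ : 0 < Real.sqrt r₀ := Real.sqrt_pos.2 hr₀
  have hgle : g r₀ ≤ g r := hmono (Set.mem_Ici.2 le_rfl) hr hr
  have hsle : Real.sqrt r₀ ≤ Real.sqrt r := Real.sqrt_le_sqrt hr
  have hfrac : 0 ≤ 2 * c / Real.sqrt r := div_nonneg (by linarith) hsr.le
  -- key log inequality
  have hlog : Real.log (A r₀) + 2 * (Real.log r - Real.log r₀) + (-2 * c / Real.sqrt r₀)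
      ≤ Real.log (A r) := by
    have : Real.log (A r₀) - 2 * Real.log r₀ - 2 * c / Real.sqrt r₀
        ≤ Real.log (A r) - 2 * Real.log r - 2 * c / Real.sqrt r := hgle
    have hn : -2 * c / Real.sqrt r₀ = -(2 * c / Real.sqrt r₀) := by ring
    have ht₀ : 0 ≤ 2 * c / Real.sqrt r₀ := div_nonneg (by linarith) hsr₀.le
    rw [hn]
    linarith
  have hexp := Real.exp_le_exp.2 hlog
  rw [Real.exp_log hAr] at hexp
  refine le_trans (le_of_eq ?_) hexp
  rw [Real.exp_add, Real.exp_add, Real.exp_log hAr₀]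
  congr 1
  congr 1
  have : Real.log r - Real.log r₀ = Real.log (r / r₀) := (Real.log_div hr0.ne' hr₀.ne').symm
  rw [this, show (2 : ℝ) * Real.log (r / r₀) = Real.log (r / r₀) * 2 by ring,
    Real.exp_mul, Real.exp_log (div_pos hr0 hr₀)]
  norm_num
end

section
/- Quadratic growth from the logarithmic-scale integral inequality (nonparabolic case): let r₀ > 0 and let A : [r₀,∞) → ℝ be continuously differentiable with A(r) > 0 for all r ≥ r₀. Define a(r) := r · A'(r)/A(r), and suppose a(r) ≥ 0 for all r ≥ r₀ and a(t) − a(s) ≥ ∫ₛᵗ (1 − a(u)²/4) · (du/u) for all r₀ ≤ s ≤ t. Then there exists c > 0 such that A(r) ≥ c r² for all r ≥ r₀. -/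
open intervalIntegral Set

/-- Quadratic growth from the logarithmic-scale integral inequality (nonparabolic case):
if `A` is `C¹` and positive on `[r₀, ∞)` (with `r₀ > 0`) and `a r := r A' r / A r`
is nonnegative and satisfies `a t - a s ≥ ∫ₛᵗ (1 - a(u)²/4) du/u`, then there is `c > 0`
with `A r ≥ c r²` for all `r ≥ r₀`. -/
theorem quadratic_growth_nonparabolic (r₀ : ℝ) (hr₀ : 0 < r₀) (A A' : ℝ → ℝ)
    (hA_deriv : ∀ r ∈ Set.Ici r₀, HasDerivWithinAt A (A' r) (Set.Ici r₀) r)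
    (hA'_cont : ContinuousOn A' (Set.Ici r₀))
    (hA_pos : ∀ r ∈ Set.Ici r₀, 0 < A r)
    (ha_nonneg : ∀ r ∈ Set.Ici r₀, 0 ≤ r * A' r / A r)
    (ha_int : ∀ s t : ℝ, r₀ ≤ s → s ≤ t →
      (t * A' t / A t) - (s * A' s / A s) ≥
        ∫ u in s..t, (1 - (u * A' u / A u)^2 / 4) / u) :
    ∃ c > 0, ∀ r ∈ Set.Ici r₀, A r ≥ c * r^2 := by
  set a : ℝ → ℝ := fun r => r * A' r / A r with ha_def
  have hA_cont : ContinuousOn A (Set.Ici r₀) := fun x hx => (hA_deriv x hx).continuousWithinAt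
  have hA_ne : ∀ x ∈ Set.Ici r₀, A x ≠ 0 := fun x hx => ne_of_gt (hA_pos x hx)
  have hx_pos : ∀ x ∈ Set.Ici r₀, (0:ℝ) < x := fun x hx => lt_of_lt_of_le hr₀ hx
  have ha_cont : ContinuousOn a (Set.Ici r₀) :=
    (continuousOn_id.mul hA'_cont).div hA_cont hA_ne
  -- At interior points, full derivative
  have hA_derivAt : ∀ x ∈ Set.Ioi r₀, HasDerivAt A (A' x) x := by
    intro x hx
    exact (hA_deriv x (Set.mem_Ici.mpr (le_of_lt hx))).hasDerivAt
      (Filter.mem_of_superset (Ioi_mem_nhds hx) Ioi_subset_Ici_self)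
  by_cases hcase : ∃ r₁ ∈ Set.Ici r₀, 2 ≤ a r₁
  · obtain ⟨r₁, hr₁, h2⟩ := hcase
    -- barrier: a stays ≥ 2 past r₁
    have hbar : ∀ t, r₁ ≤ t → 2 ≤ a t := by
      intro t ht
      by_contra hlt
      push_neg at hlt
      set K := Set.Icc r₁ t ∩ a ⁻¹' Set.Ici 2 with hK
      have hKsub : K ⊆ Set.Icc r₁ t := Set.inter_subset_left
      have hKne : K.Nonempty := ⟨r₁, ⟨le_rfl, ht⟩, h2⟩
      have hKclosed : IsClosed K := by
        apply ContinuousOn.preimage_isClosed_of_isClosed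
          (ha_cont.mono (fun x hx => le_trans hr₁ hx.1))
          isClosed_Icc isClosed_Ici
      have hKcomp : IsCompact K := isCompact_Icc.of_isClosed_subset hKclosed hKsub
      set s₀ := sSup K with hs₀
      have hs₀K : s₀ ∈ K := hKcomp.sSup_mem hKne
      have hs₀2 : 2 ≤ a s₀ := hs₀K.2
      have hs₀t : s₀ ≤ t := hs₀K.1.2
      have hs₀r₀ : r₀ ≤ s₀ := le_trans hr₁ hs₀K.1.1
      have hs₀lt : s₀ < t := lt_of_le_of_ne hs₀t (by
        intro h; rw [h] at hs₀2; linarith)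
      have hless : ∀ u, s₀ < u → u ≤ t → a u < 2 := by
        intro u h1 h2'
        by_contra h3
        push_neg at h3
        have : u ∈ K := ⟨⟨le_trans hs₀K.1.1 h1.le, h2'⟩, h3⟩
        have := le_csSup hKcomp.bddAbove this
        linarith
      have hmono : ∀ s ∈ Set.Ioc s₀ t, a s ≤ a t := by
        intro s hs
        have hint := ha_int s t (le_trans hs₀r₀ hs.1.le) hs.2
        have hnn : 0 ≤ ∫ u in s..t, (1 - (u * A' u / A u)^2 / 4) / u := by
          apply intervalIntegral.integral_nonneg hs.2
          intro u hu
          have hu1 : s₀ < u := lt_of_lt_of_le hs.1 hu.1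
          have hu2 : a u < 2 := hless u hu1 hu.2
          have hur : r₀ ≤ u := le_trans hs₀r₀ hu1.le
          have hu0 : 0 ≤ a u := ha_nonneg u hur
          have hupos : (0:ℝ) < u := hx_pos u hur
          have : (0:ℝ) ≤ 1 - (a u)^2 / 4 := by nlinarith
          exact div_nonneg this hupos.le
        have hnn' : 0 ≤ ∫ u in s..t, (1 - (u * A' u / A u)^2 / 4) / u := hnn
        show s * A' s / A s ≤ t * A' t / A t
        linarith
      have htend : Filter.Tendsto a (nhdsWithin s₀ (Set.Ioi s₀)) (nhds (a s₀)) :=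
        (ha_cont s₀ hs₀r₀).mono (fun x hx => le_trans hs₀r₀ (le_of_lt hx))
      have : a s₀ ≤ a t := by
        apply le_of_tendsto htend
        filter_upwards [Ioc_mem_nhdsGT hs₀lt] with s hs using hmono s hs
      linarith
    -- monotonicity of A t / t^2 on Ici r₁
    have hr₁pos : 0 < r₁ := hx_pos r₁ hr₁
    have hgmono : MonotoneOn (fun t => A t / t^2) (Set.Ici r₁) := by
      apply monotoneOn_of_hasDerivWithinAt_nonneg (convex_Ici r₁)
        ((hA_cont.mono (Set.Ici_subset_Ici.mpr hr₁)).div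
          (continuousOn_pow 2) (fun x hx => pow_ne_zero 2 (hx_pos x (Set.mem_Ici.mpr (le_trans hr₁ hx))).ne'))
        (f' := fun x => (A' x * x^2 - A x * (2 * x^(2-1))) / (x^2)^2)
      · intro x hx
        rw [interior_Ici] at hx
        have hxr₀ : r₀ < x := lt_of_le_of_lt hr₁ hx
        have hd : HasDerivAt (fun t => A t / t^2)
            ((A' x * x^2 - A x * (2 * x^(2-1))) / (x^2)^2) x :=
          (hA_derivAt x hxr₀).div (hasDerivAt_pow 2 x)
            (pow_ne_zero 2 (hx_pos x hxr₀.le).ne')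
        exact hd.hasDerivWithinAt
      · intro x hx
        rw [interior_Ici] at hx
        have hxr₀ : r₀ ≤ x := le_trans hr₁ hx.le
        have hxpos : 0 < x := hx_pos x hxr₀
        have h2x : 2 ≤ a x := hbar x hx.le
        have hApos := hA_pos x hxr₀
        have h2x' : 2 ≤ x * A' x / A x := h2x
        have : 2 * A x ≤ x * A' x := by
          have := (le_div_iff₀ hApos).mp h2x'
          linarith
        have hnum : 0 ≤ A' x * x^2 - A x * (2 * x^(2-1)) := by
          norm_num
          nlinarith
        positivity
    -- min of A on Icc r₀ r₁
    obtain ⟨x₀, hx₀mem, hx₀min⟩ := isCompact_Icc.exists_isMinOn (Set.nonempty_Icc.mpr hr₁)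
      (hA_cont.mono (fun x hx => hx.1))
    have hm : 0 < A x₀ := hA_pos x₀ hx₀mem.1
    refine ⟨A x₀ / r₁^2, by positivity, ?_⟩
    intro r hr
    rcases le_total r r₁ with h | h
    · have h1 : A x₀ ≤ A r := hx₀min ⟨hr, h⟩
      have h2 : r^2 ≤ r₁^2 := by nlinarith [hx_pos r hr]
      have h3 : A x₀ / r₁^2 * r^2 ≤ A x₀ := by
        rw [div_mul_eq_mul_div, div_le_iff₀ (by positivity)]
        nlinarith
      linarith
    · have h1 : A r₁ / r₁^2 ≤ A r / r^2 := hgmono (Set.mem_Ici.mpr le_rfl) h h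
      have h2 : A x₀ ≤ A r₁ := hx₀min ⟨hr₁, le_rfl⟩
      have hrpos : 0 < r := hx_pos r hr
      have h3 : A x₀ / r₁^2 ≤ A r / r^2 := le_trans (by gcongr) h1
      calc A x₀ / r₁^2 * r^2 ≤ A r / r^2 * r^2 := by gcongr
        _ = A r := by field_simp
  · push_neg at hcase
    -- a r < 2 everywhere
    set F : ℝ → ℝ := fun t => ∫ u in r₀..t, (2 - a u) / u with hF_def
    have hg2cont : ContinuousOn (fun u => (2 - a u) / u) (Set.Ici r₀) :=
      (continuousOn_const.sub ha_cont).div continuousOn_id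
        (fun x hx => (hx_pos x hx).ne')
    have hf2cont : ContinuousOn (fun u => (1 - (u * A' u / A u)^2 / 4) / u) (Set.Ici r₀) := by
      exact (continuousOn_const.sub (((ha_cont.pow 2)).div_const 4)).div continuousOn_id
        (fun x hx => (hx_pos x hx).ne')
    have hg2int : ∀ t, r₀ ≤ t → IntervalIntegrable (fun u => (2 - a u) / u) MeasureTheory.volume r₀ t := by
      intro t ht
      exact (hg2cont.mono (by rw [Set.uIcc_of_le ht]; exact fun x hx => hx.1)).intervalIntegrable
    have hf2int : ∀ t, r₀ ≤ t → IntervalIntegrable (fun u => (1 - (u * A' u / A u)^2 / 4) / u) MeasureTheory.volume r₀ t := by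
      intro t ht
      exact (hf2cont.mono (by rw [Set.uIcc_of_le ht]; exact fun x hx => hx.1)).intervalIntegrable
    have hF4 : ∀ t, r₀ ≤ t → F t ≤ 4 := by
      intro t ht
      have hint := ha_int r₀ t le_rfl ht
      have hmono : F t ≤ ∫ u in r₀..t, 2 * ((1 - (u * A' u / A u)^2 / 4) / u) := by
        apply intervalIntegral.integral_mono_on ht (hg2int t ht)
          ((hf2int t ht).const_mul 2)
        intro u hu
        have hu0 : 0 ≤ a u := ha_nonneg u hu.1
        have hu2 : a u < 2 := hcase u hu.1
        have hupos : 0 < u := hx_pos u hu.1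
        have hkey : 2 - a u ≤ 2 * (1 - (a u)^2/4) := by nlinarith
        calc (2 - a u) / u ≤ (2 * (1 - (a u)^2/4)) / u := by gcongr
          _ = 2 * ((1 - (u * A' u / A u)^2 / 4) / u) := by rw [ha_def]; ring
      rw [intervalIntegral.integral_const_mul] at hmono
      have h1 : t * A' t / A t < 2 := hcase t ht
      have h2 : 0 ≤ r₀ * A' r₀ / A r₀ := ha_nonneg r₀ Set.self_mem_Ici
      have hint' : t * A' t / A t - r₀ * A' r₀ / A r₀ ≥
          ∫ u in r₀..t, (1 - (u * A' u / A u)^2 / 4) / u := hint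
      linarith
    -- h := A t / t^2 * exp (F t) is monotone on Ici r₀
    have hkey : ∀ t, r₀ ≤ t → A r₀ / r₀^2 ≤ A t / t^2 * Real.exp (F t) := by
      intro t ht
      rcases eq_or_lt_of_le ht with rfl | ht'
      · simp [hF_def, intervalIntegral.integral_same, le_refl]
      have hFcont : ContinuousOn F (Set.Icc r₀ t) := by
        have := intervalIntegral.continuousOn_primitive_interval
          (f := fun u => (2 - a u) / u) (μ := MeasureTheory.volume) (a := r₀) (b := t) ?_
        · rwa [Set.uIcc_of_le ht] at this
        · rw [Set.uIcc_of_le ht]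
          exact (hg2cont.mono (fun x hx => hx.1)).integrableOn_compact isCompact_Icc
      have hmono : MonotoneOn (fun u => A u / u^2 * Real.exp (F u)) (Set.Icc r₀ t) := by
        apply monotoneOn_of_hasDerivWithinAt_nonneg (convex_Icc r₀ t)
          (ContinuousOn.mul
            ((hA_cont.mono (fun x hx => hx.1)).div (continuousOn_pow 2)
              (fun x hx => pow_ne_zero 2 (hx_pos x hx.1).ne'))
            (hFcont.rexp))
          (f' := fun x => (A' x * x^2 - A x * (2 * x^(2-1))) / (x^2)^2 * Real.exp (F x)
            + (A x / x^2) * (Real.exp (F x) * ((2 - a x) / x)))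
        · intro x hx
          rw [interior_Icc] at hx
          have hxr₀ : r₀ < x := hx.1
          have hxpos : 0 < x := hx_pos x hxr₀.le
          have hdA : HasDerivAt (fun u => A u / u^2)
              ((A' x * x^2 - A x * (2 * x^(2-1))) / (x^2)^2) x :=
            (hA_derivAt x hxr₀).div (hasDerivAt_pow 2 x) (pow_ne_zero 2 hxpos.ne')
          have hdF : HasDerivAt F ((2 - a x) / x) x := by
            apply intervalIntegral.integral_hasDerivAt_right
              (hg2int x hxr₀.le)
              (ContinuousOn.stronglyMeasurableAtFilter isOpen_Ioi
                (hg2cont.mono Ioi_subset_Ici_self) x hxr₀)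
              ((hg2cont x hxr₀.le).continuousAt
                (Filter.mem_of_superset (Ioi_mem_nhds hxr₀) Ioi_subset_Ici_self))
          exact (hdA.mul hdF.exp).hasDerivWithinAt
        · intro x hx
          rw [interior_Icc] at hx
          have hxr₀ : r₀ < x := hx.1
          have hxpos : 0 < x := hx_pos x hxr₀.le
          have hAx := hA_pos x hxr₀.le
          have hexp : 0 < Real.exp (F x) := Real.exp_pos _
          have : (A' x * x^2 - A x * (2 * x^(2-1))) / (x^2)^2 * Real.exp (F x)
            + (A x / x^2) * (Real.exp (F x) * ((2 - a x) / x)) = 0 := by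
            rw [ha_def]
            field_simp
            ring
          rw [this]
      have h := hmono (Set.left_mem_Icc.mpr ht) (Set.right_mem_Icc.mpr ht) ht
      simp only [hF_def, intervalIntegral.integral_same, Real.exp_zero, mul_one] at h ⊢
      exact h
    have hA0 : 0 < A r₀ := hA_pos r₀ Set.self_mem_Ici
    refine ⟨A r₀ / r₀^2 / Real.exp 4, by positivity, ?_⟩
    intro r hr
    have h1 := hkey r hr
    have h2 : Real.exp (F r) ≤ Real.exp 4 := Real.exp_le_exp.mpr (hF4 r hr)
    have hrpos : 0 < r := hx_pos r hr
    have hApos := hA_pos r hr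
    have h3 : A r₀ / r₀^2 ≤ A r / r^2 * Real.exp 4 := by
      calc A r₀ / r₀^2 ≤ A r / r^2 * Real.exp (F r) := h1
        _ ≤ A r / r^2 * Real.exp 4 := by gcongr
    have h4 : A r₀ / r₀^2 / Real.exp 4 ≤ A r / r^2 :=
      (div_le_iff₀ (Real.exp_pos 4)).mpr h3
    calc A r₀ / r₀^2 / Real.exp 4 * r^2 ≤ A r / r^2 * r^2 := by gcongr
      _ = A r := by field_simp
end
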